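/- Let k be nonnegative and integrable on [0,∞) with tail h(t) = ∫_t^∞ k(s) ds, let g be nonnegative nonincreasing with g(0) < ∞ and g(t) → 0, and let β > 0 with 2βh(0) < 1. Then the series S(t) := g(t) + max{1, g(0), h(0)} Σ_{n≥1} 2β (2βh(0))^{n−1} (h(t/2^n) + g(t/2^n)) converges for every t ≥ 0 and S(t) → 0 as t → ∞. -/

import Mathlib

open MeasureTheory Set Filter

theorem series_bound_converges_to_zero (g k h : ℝ → ℝ) (β : ℝ)
    (hg_nonneg : ∀ t ∈ Ici (0:ℝ), 0 ≤ g t)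
    (hg_anti : AntitoneOn g (Ici 0))
    (hg_lim : Tendsto g atTop (nhds 0))
    (hk_nonneg : ∀ t ∈ Ici (0:ℝ), 0 ≤ k t)
    (hk_int : IntegrableOn k (Ici 0))
    (hh : ∀ t, h t = ∫ s in Ioi t, k s)
    (hβ : 0 < β) (hβ' : 2 * β * h 0 < 1)
    (S : ℝ → ℝ)
    (hS : ∀ t, S t = g t + max 1 (max (g 0) (h 0)) *
      ∑' n : ℕ, 2 * β * (2 * β * h 0) ^ n *
        (h (t / 2 ^ (n + 1)) + g (t / 2 ^ (n + 1)))) :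
    (∀ t ≥ (0:ℝ), Summable fun n : ℕ =>
        2 * β * (2 * β * h 0) ^ n *
          (h (t / 2 ^ (n + 1)) + g (t / 2 ^ (n + 1)))) ∧
      Tendsto S atTop (nhds 0) := by
  have hk_int' : IntegrableOn k (Ioi 0) := hk_int.mono_set Ioi_subset_Ici_self
  have hh_nonneg : ∀ t ≥ (0:ℝ), 0 ≤ h t := by
    intro t ht
    rw [hh]
    apply setIntegral_nonneg measurableSet_Ioi
    intro x hx
    exact hk_nonneg x (le_trans ht (le_of_lt hx))
  have hh_le : ∀ t ≥ (0:ℝ), h t ≤ h 0 := by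
    intro t ht
    rw [hh, hh]
    apply setIntegral_mono_set hk_int'
    · filter_upwards [ae_restrict_mem measurableSet_Ioi] with x hx
      exact hk_nonneg x (mem_Ici.2 (le_of_lt (mem_Ioi.1 hx)))
    · exact Filter.Eventually.of_forall (Ioi_subset_Ioi ht)
  have h0 : 0 ≤ h 0 := hh_nonneg 0 le_rfl
  have g0 : 0 ≤ g 0 := hg_nonneg 0 (mem_Ici.2 le_rfl)
  have hC0 : 0 ≤ 2 * β * h 0 := by positivity
  have hgeo : Summable fun n : ℕ => (2 * β * (h 0 + g 0)) * (2 * β * h 0) ^ n :=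
    (summable_geometric_of_lt_one hC0 hβ').mul_left _
  -- pointwise nonnegativity and bound of the terms, for t ≥ 0
  have hterm_nonneg : ∀ t ≥ (0:ℝ), ∀ n : ℕ,
      0 ≤ 2 * β * (2 * β * h 0) ^ n * (h (t / 2 ^ (n + 1)) + g (t / 2 ^ (n + 1))) := by
    intro t ht n
    have hs : (0:ℝ) ≤ t / 2 ^ (n + 1) := by positivity
    have := hh_nonneg _ hs
    have := hg_nonneg _ (mem_Ici.2 hs)
    positivity
  have hterm_le : ∀ t ≥ (0:ℝ), ∀ n : ℕ,
      2 * β * (2 * β * h 0) ^ n * (h (t / 2 ^ (n + 1)) + g (t / 2 ^ (n + 1))) ≤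
        (2 * β * (h 0 + g 0)) * (2 * β * h 0) ^ n := by
    intro t ht n
    have hs : (0:ℝ) ≤ t / 2 ^ (n + 1) := by positivity
    have h1 : h (t / 2 ^ (n + 1)) ≤ h 0 := hh_le _ hs
    have h2 : g (t / 2 ^ (n + 1)) ≤ g 0 := hg_anti (mem_Ici.2 le_rfl) (mem_Ici.2 hs) hs
    have : h (t / 2 ^ (n + 1)) + g (t / 2 ^ (n + 1)) ≤ h 0 + g 0 := add_le_add h1 h2
    calc 2 * β * (2 * β * h 0) ^ n * (h (t / 2 ^ (n + 1)) + g (t / 2 ^ (n + 1)))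
        ≤ 2 * β * (2 * β * h 0) ^ n * (h 0 + g 0) := by
          apply mul_le_mul_of_nonneg_left this (by positivity)
      _ = (2 * β * (h 0 + g 0)) * (2 * β * h 0) ^ n := by ring
  have hsum : ∀ t ≥ (0:ℝ), Summable fun n : ℕ =>
      2 * β * (2 * β * h 0) ^ n * (h (t / 2 ^ (n + 1)) + g (t / 2 ^ (n + 1))) := by
    intro t ht
    exact Summable.of_nonneg_of_le (hterm_nonneg t ht) (hterm_le t ht) hgeo
  refine ⟨hsum, ?_⟩
  -- h tends to 0 at top
  have hh_top : Tendsto h atTop (nhds 0) := by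
    have hL : Tendsto (fun t => ∫ x in (0:ℝ)..t, k x) atTop (nhds (∫ x in Ioi (0:ℝ), k x)) :=
      intervalIntegral_tendsto_integral_Ioi 0 hk_int' tendsto_id
    have key : ∀ᶠ t in atTop, (∫ x in Ioi (0:ℝ), k x) - ∫ x in (0:ℝ)..t, k x = h t := by
      filter_upwards [eventually_ge_atTop (0:ℝ)] with t ht
      have hsplit : (∫ x in Ioi (0:ℝ), k x) =
          (∫ x in Ioc (0:ℝ) t, k x) + ∫ x in Ioi t, k x := by
        rw [← setIntegral_union (Ioc_disjoint_Ioi le_rfl) measurableSet_Ioi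
          (hk_int'.mono_set Ioc_subset_Ioi_self) (hk_int'.mono_set (Ioi_subset_Ioi ht)),
          Ioc_union_Ioi_eq_Ioi ht]
      rw [intervalIntegral.integral_of_le ht, hh, hsplit]
      ring
    have : Tendsto (fun t => (∫ x in Ioi (0:ℝ), k x) - ∫ x in (0:ℝ)..t, k x) atTop
        (nhds ((∫ x in Ioi (0:ℝ), k x) - ∫ x in Ioi (0:ℝ), k x)) :=
      tendsto_const_nhds.sub hL
    rw [sub_self] at this
    exact Tendsto.congr' key this
  -- termwise limit and dominated convergence for the tsum
  have htsum : Tendsto (fun t => ∑' n : ℕ, 2 * β * (2 * β * h 0) ^ n *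
      (h (t / 2 ^ (n + 1)) + g (t / 2 ^ (n + 1)))) atTop (nhds 0) := by
    have := tendsto_tsum_of_dominated_convergence (𝓕 := atTop)
      (f := fun t (n : ℕ) => 2 * β * (2 * β * h 0) ^ n *
        (h (t / 2 ^ (n + 1)) + g (t / 2 ^ (n + 1))))
      (g := fun _ : ℕ => (0:ℝ))
      (bound := fun n : ℕ => (2 * β * (h 0 + g 0)) * (2 * β * h 0) ^ n)
      hgeo ?_ ?_
    · simpa using this
    · intro n
      have hdiv : Tendsto (fun t : ℝ => t / 2 ^ (n + 1)) atTop atTop :=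
        tendsto_id.atTop_div_const (by positivity)
      have : Tendsto (fun t : ℝ => h (t / 2 ^ (n + 1)) + g (t / 2 ^ (n + 1))) atTop
          (nhds (0 + 0)) := (hh_top.comp hdiv).add (hg_lim.comp hdiv)
      rw [add_zero] at this
      simpa using (tendsto_const_nhds (x := 2 * β * (2 * β * h 0) ^ n)).mul this
    · filter_upwards [eventually_ge_atTop (0:ℝ)] with t ht n
      rw [Real.norm_eq_abs, abs_of_nonneg (hterm_nonneg t ht n)]
      exact hterm_le t ht n
  have : Tendsto S atTop (nhds (0 + max 1 (max (g 0) (h 0)) * 0)) := by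
    apply Tendsto.congr (fun t => (hS t).symm)
    exact hg_lim.add (tendsto_const_nhds.mul htsum)
  simpa using this
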